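/- arXiv:1906.04631 — 2 statements merged into one kernel-verified Lean document; each statement's English description precedes it below -/
import Mathlib

section
/- For r ≥ 0, let cv_{1-α}(r) denote the (1-α)-quantile of |N(r, 1)|, the distribution of the absolute value of a normal random variable with mean r and variance 1, where 0 < α < 1/2. If Z is standard normal and |b| ≤ r, then P(|Z + b| ≤ cv_{1-α}(r)) ≥ 1 - α. -/
open ProbabilityTheory MeasureTheory Set Filter Real Topology

namespace Stmt7Aux

noncomputable def phi : ℝ → ℝ := gaussianPDFReal 0 1

lemma phi_integrable : Integrable phi := integrable_gaussianPDFReal 0 1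

lemma phi_nonneg (x : ℝ) : 0 ≤ phi x := gaussianPDFReal_nonneg 0 1 x

lemma cdf_eq_integral (x : ℝ) :
    cdf (gaussianReal 0 1) x = ∫ t in Iic x, phi t := by
  rw [cdf_eq_real, measureReal_def, gaussianReal_apply_eq_integral 0 one_ne_zero,
    ENNReal.toReal_ofReal]
  · rfl
  · exact setIntegral_nonneg measurableSet_Iic fun t _ => phi_nonneg t

lemma cdf_sub (a c : ℝ) (hac : a ≤ c) :
    cdf (gaussianReal 0 1) c - cdf (gaussianReal 0 1) a = ∫ t in a..c, phi t := by
  rw [cdf_eq_integral, cdf_eq_integral, intervalIntegral.integral_of_le hac]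
  have hu : (∫ t in Iic a ∪ Ioc a c, phi t) = (∫ t in Iic a, phi t) + ∫ t in Ioc a c, phi t :=
    MeasureTheory.setIntegral_union (s := Iic a) (t := Ioc a c)
      (Set.Iic_disjoint_Ioc (le_refl a)) measurableSet_Ioc
      phi_integrable.integrableOn phi_integrable.integrableOn
  rw [Iic_union_Ioc_eq_Iic hac] at hu
  rw [hu]; ring

lemma cdf_continuous : Continuous (cdf (gaussianReal 0 1)) := by
  have h : ∀ x, cdf (gaussianReal 0 1) x
      = cdf (gaussianReal 0 1) 0 + ∫ t in (0:ℝ)..x, phi t := by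
    intro x
    rcases le_total 0 x with hx | hx
    · have := cdf_sub 0 x hx; linarith
    · have := cdf_sub x 0 hx
      rw [intervalIntegral.integral_symm]
      linarith
  have : Continuous fun x => cdf (gaussianReal 0 1) 0 + ∫ t in (0:ℝ)..x, phi t :=
    continuous_const.add (phi_integrable.continuous_primitive 0)
  exact this.congr fun x => (h x).symm

lemma phi_even (x : ℝ) : phi (-x) = phi x := by
  simp [phi, gaussianPDFReal, neg_sq]

/-- pointwise comparison : for `x ≤ t`, `0 ≤ t`, shifting right by `2t` decreases the pdf. -/
lemma phi_shift_le {t x : ℝ} (ht : 0 ≤ t) (hx : x ≤ t) : phi (x - 2 * t) ≤ phi x := by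
  unfold phi gaussianPDFReal
  have hc : (0:ℝ) ≤ (√(2 * π * (1:NNReal)))⁻¹ := by positivity
  refine mul_le_mul_of_nonneg_left (Real.exp_le_exp.2 ?_) hc
  have h1 : ((1:NNReal):ℝ) = 1 := by norm_num
  rw [h1]
  nlinarith [sq_nonneg (x - t)]

lemma key_ineq {t b r : ℝ} (ht : 0 ≤ t) (hb0 : 0 ≤ b) (hbr : b ≤ r) :
    ∫ x in (-t - r)..(-t - b), phi x ≤ ∫ x in (t - r)..(t - b), phi x := by
  have h1 : (∫ x in (-t - r)..(-t - b), phi x)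
      = ∫ x in (t - r)..(t - b), phi (x - 2 * t) := by
    rw [intervalIntegral.integral_comp_sub_right phi (2 * t)]
    ring_nf
  rw [h1]
  have hint : Integrable (fun x => phi (x - 2 * t)) := by
    have : (fun x => phi (x - 2 * t)) = gaussianPDFReal (0 + 2 * t) 1 := by
      funext x; exact gaussianPDFReal_sub x (2 * t)
    rw [this]; exact integrable_gaussianPDFReal _ 1
  refine intervalIntegral.integral_mono_on (by linarith) hint.intervalIntegrable
    phi_integrable.intervalIntegrable fun x hx => ?_
  exact phi_shift_le ht (by rcases hx with ⟨_, h2⟩; linarith)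

end Stmt7Aux

open Stmt7Aux

/-- Coverage of the bias-aware critical value: if cv is the (1-α)-quantile of
|N(r,1)| and |b| ≤ r, then P(|Z + b| ≤ cv) ≥ 1 - α for Z standard normal. -/
theorem stmt7 (α r b cv : ℝ) (hα : 0 < α) (hα2 : α < 1 / 2) (hr : 0 ≤ r)
    (hcv : cv = sInf {t : ℝ | 1 - α ≤
      cdf (gaussianReal 0 1) (t - r) - cdf (gaussianReal 0 1) (-t - r)})
    (hb : |b| ≤ r) :
    1 - α ≤ ((gaussianReal 0 1) {z : ℝ | |z + b| ≤ cv}).toReal := by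
  set Φ := cdf (gaussianReal 0 1) with hΦ
  set S := {t : ℝ | 1 - α ≤ Φ (t - r) - Φ (-t - r)} with hS
  -- S is nonempty
  have hF1 : Tendsto (fun t => Φ (t - r) - Φ (-t - r)) atTop (𝓝 1) := by
    have h1 : Tendsto (fun t => Φ (t - r)) atTop (𝓝 1) :=
      (tendsto_cdf_atTop (gaussianReal 0 1)).comp (tendsto_atTop_add_const_right _ (-r)
        tendsto_id |>.congr fun x => by simp [sub_eq_add_neg])
    have h2 : Tendsto (fun t => Φ (-t - r)) atTop (𝓝 0) := by
      refine (tendsto_cdf_atBot (gaussianReal 0 1)).comp ?_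
      have : Tendsto (fun t : ℝ => -t - r) atTop atBot := by
        refine tendsto_atBot_add_const_right _ (-r) tendsto_neg_atTop_atBot |>.congr
          fun x => by simp [sub_eq_add_neg]
      exact this
    simpa using h1.sub h2
  have hSne : S.Nonempty := by
    have : ∀ᶠ t in atTop, 1 - α ≤ Φ (t - r) - Φ (-t - r) :=
      hF1.eventually_const_le (by linarith)
    rcases this.exists with ⟨t, ht⟩
    exact ⟨t, ht⟩
  have hSpos : ∀ t ∈ S, (0:ℝ) ≤ t := by
    intro t ht
    by_contra h
    push_neg at h
    have hmono := monotone_cdf (gaussianReal 0 1)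
    have : Φ (t - r) ≤ Φ (-t - r) := hmono (show t - r ≤ -t - r by linarith)
    have ht' : 1 - α ≤ Φ (t - r) - Φ (-t - r) := ht
    linarith
  have hSbdd : BddBelow S := ⟨0, fun t ht => hSpos t ht⟩
  have hSclosed : IsClosed S := by
    have : S = (fun t => Φ (t - r) - Φ (-t - r)) ⁻¹' Ici (1 - α) := rfl
    rw [this]
    exact IsClosed.preimage
      (((cdf_continuous.comp (continuous_id.sub continuous_const)).sub
        (cdf_continuous.comp (continuous_neg.sub continuous_const)))) isClosed_Ici
  have hcvS : cv ∈ S := hcv ▸ hSclosed.csInf_mem hSne hSbdd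
  have hcv0 : 0 ≤ cv := hSpos cv hcvS
  have hcvr : 1 - α ≤ Φ (cv - r) - Φ (-cv - r) := hcvS
  -- express things as interval integrals
  set b' := |b| with hb'
  have hb'0 : 0 ≤ b' := abs_nonneg b
  have hb'r : b' ≤ r := hb
  -- the measure of the event
  have hset : {z : ℝ | |z + b| ≤ cv} = Icc (-cv - b) (cv - b) := by
    ext z
    simp only [Set.mem_setOf_eq, Set.mem_Icc, abs_le]
    constructor <;> intro h <;> constructor <;> linarith [h.1, h.2]
  have hmeas : ((gaussianReal 0 1) {z : ℝ | |z + b| ≤ cv}).toReal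
      = ∫ x in (-cv - b)..(cv - b), phi x := by
    have h0 : 0 ≤ ∫ x in Icc (-cv - b) (cv - b), gaussianPDFReal 0 1 x :=
      setIntegral_nonneg measurableSet_Icc fun t _ => phi_nonneg t
    rw [hset, gaussianReal_apply_eq_integral 0 one_ne_zero, ENNReal.toReal_ofReal h0,
      MeasureTheory.integral_Icc_eq_integral_Ioc,
      intervalIntegral.integral_of_le (show -cv - b ≤ cv - b by linarith)]
    rfl
  -- symmetry: replace b by |b|
  have hsym : (∫ x in (-cv - b)..(cv - b), phi x)
      = ∫ x in (-cv - b')..(cv - b'), phi x := by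
    rcases abs_cases b with ⟨h1, _⟩ | ⟨h1, _⟩
    · rw [hb', h1]
    · rw [hb', h1]
      have := intervalIntegral.integral_comp_neg (a := -cv - -b) (b := cv - -b) phi
      rw [intervalIntegral.integral_congr (g := phi) (fun x _ => phi_even x)] at this
      rw [this]
      congr 1 <;> ring
  -- additivity and the key inequality
  have hInt : ∀ u v : ℝ, IntervalIntegrable phi volume u v :=
    fun u v => phi_integrable.intervalIntegrable
  have hadd1 : (∫ x in (-cv - r)..(cv - r), phi x) + ∫ x in (cv - r)..(cv - b'), phi x
      = ∫ x in (-cv - r)..(cv - b'), phi x :=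
    intervalIntegral.integral_add_adjacent_intervals (hInt _ _) (hInt _ _)
  have hadd2 : (∫ x in (-cv - r)..(-cv - b'), phi x) + ∫ x in (-cv - b')..(cv - b'), phi x
      = ∫ x in (-cv - r)..(cv - b'), phi x :=
    intervalIntegral.integral_add_adjacent_intervals (hInt _ _) (hInt _ _)
  have hkey := key_ineq (t := cv) hcv0 hb'0 hb'r
  have hPr : Φ (cv - r) - Φ (-cv - r) = ∫ x in (-cv - r)..(cv - r), phi x :=
    cdf_sub _ _ (by linarith)
  calc 1 - α ≤ Φ (cv - r) - Φ (-cv - r) := hcvr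
    _ = ∫ x in (-cv - r)..(cv - r), phi x := hPr
    _ ≤ ∫ x in (-cv - b')..(cv - b'), phi x := by linarith
    _ = ((gaussianReal 0 1) {z : ℝ | |z + b| ≤ cv}).toReal := by rw [hmeas, hsym]
end

section
/- Let x₀ < x₁ < ... < x_k be distinct reals and t ∈ ℝ. Define β_k(t) = Σ_{j : x_j > t} Π_{l ≠ j} (x_j - t)/(x_j - x_l) (the leading coefficient of the polynomial of degree k interpolating (xᵢ, 1{xᵢ ≥ t}(xᵢ - t)^k)). Then β_k(t), viewed as a function of the largest node x_k, is monotonically nondecreasing in x_k on (x_{k-1}, ∞). -/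
open Finset

open Polynomial

/-- The leading coefficient β_k(t) = Σ_{j : x_j > t} Π_{l ≠ j} (x_j - t)/(x_j - x_l)
of the degree-k interpolant of the truncated power function. -/
noncomputable def betaCoeff (k : ℕ) (t : ℝ) (z : Fin k → ℝ) : ℝ :=
  ∑ j ∈ Finset.univ.filter (fun j => t < z j),
    ∏ l ∈ Finset.univ.erase j, (z j - t) / (z j - z l)

noncomputable def dd {n : ℕ} (w : Fin n → ℝ) (f : ℝ → ℝ) : ℝ :=
  ∑ j, f (w j) / ∏ l ∈ Finset.univ.erase j, (w j - w l)

lemma prod_erase_succ {n : ℕ} (h : Fin (n+1) → ℝ) (i : Fin n) :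
    ∏ l ∈ Finset.univ.erase (Fin.succ i), h l
      = h 0 * ∏ l ∈ Finset.univ.erase i, h l.succ := by
  have h2 : (Finset.univ.map ⟨Fin.succ, Fin.succ_injective _⟩).erase (Fin.succ i)
      = (Finset.univ.erase i).map ⟨Fin.succ, Fin.succ_injective _⟩ :=
    (Finset.map_erase ⟨Fin.succ, Fin.succ_injective _⟩ Finset.univ i).symm
  rw [Fin.univ_succ, Finset.cons_eq_insert,
    Finset.erase_insert_of_ne (Fin.succ_ne_zero i).symm, h2,
    Finset.prod_insert (by simp), Finset.prod_map]
  rfl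

lemma prod_erase_zero {n : ℕ} (h : Fin (n+1) → ℝ) :
    ∏ l ∈ Finset.univ.erase (0 : Fin (n+1)), h l = ∏ l : Fin n, h l.succ := by
  rw [Fin.univ_succ, Finset.cons_eq_insert, Finset.erase_insert (by simp),
    Finset.prod_map]
  rfl

lemma prod_erase_castSucc {n : ℕ} (h : Fin (n+1) → ℝ) (i : Fin n) :
    ∏ l ∈ Finset.univ.erase (Fin.castSucc i), h l
      = h (Fin.last n) * ∏ l ∈ Finset.univ.erase i, h l.castSucc := by
  have h2 : (Finset.univ.map Fin.castSuccEmb).erase (Fin.castSucc i)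
      = (Finset.univ.erase i).map Fin.castSuccEmb :=
    (Finset.map_erase Fin.castSuccEmb Finset.univ i).symm
  rw [Fin.univ_castSuccEmb, Finset.cons_eq_insert,
    Finset.erase_insert_of_ne (Fin.castSucc_lt_last i).ne', h2,
    Finset.prod_insert (by simp [Fin.ext_iff]; omega), Finset.prod_map]
  rfl

lemma prod_erase_last {n : ℕ} (h : Fin (n+1) → ℝ) :
    ∏ l ∈ Finset.univ.erase (Fin.last n), h l = ∏ l : Fin n, h l.castSucc := by
  rw [Fin.univ_castSuccEmb, Finset.cons_eq_insert,
    Finset.erase_insert (by simp [Fin.ext_iff]; omega), Finset.prod_map]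
  rfl

lemma basis_coeff {n : ℕ} (w : Fin n → ℝ) (hw : Function.Injective w) (j : Fin n) :
    (Lagrange.basis Finset.univ w j).coeff (n - 1)
      = ∏ l ∈ Finset.univ.erase j, (w j - w l)⁻¹ := by
  have hd : (Lagrange.basis Finset.univ w j).natDegree = n - 1 := by
    rw [Lagrange.natDegree_basis hw.injOn (Finset.mem_univ j), Finset.card_univ,
      Fintype.card_fin]
  rw [← hd, Polynomial.coeff_natDegree, Lagrange.basis, Polynomial.leadingCoeff_prod]
  refine Finset.prod_congr rfl fun l _ => ?_
  rw [Lagrange.basisDivisor, Polynomial.leadingCoeff_mul, Polynomial.leadingCoeff_C,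
    Polynomial.leadingCoeff_X_sub_C, mul_one]

lemma dd_eq_coeff {n : ℕ} (w : Fin n → ℝ) (hw : Function.Injective w) (f : ℝ → ℝ) :
    dd w f = (Lagrange.interpolate Finset.univ w (fun j => f (w j))).coeff (n - 1) := by
  rw [Lagrange.interpolate_apply, Polynomial.finset_sum_coeff]
  refine Finset.sum_congr rfl fun j _ => ?_
  rw [Polynomial.coeff_C_mul, basis_coeff w hw j, Finset.prod_inv_distrib,
    div_eq_mul_inv]

lemma dd_poly_zero {n m : ℕ} (t : ℝ) (w : Fin n → ℝ) (hw : Function.Injective w)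
    (h : m + 2 ≤ n) : dd w (fun x => (x - t) ^ m) = 0 := by
  have hdeg : ((X - C t) ^ m : ℝ[X]).natDegree = m := by
    simp [Polynomial.natDegree_pow]
  have hlt : ((X - C t) ^ m : ℝ[X]).degree < (Finset.univ : Finset (Fin n)).card := by
    refine lt_of_le_of_lt (Polynomial.degree_le_natDegree) ?_
    rw [hdeg, Finset.card_univ, Fintype.card_fin]
    exact_mod_cast by omega
  have key := Lagrange.eq_interpolate (f := (X - C t) ^ m) hw.injOn hlt
  have heval : (fun j => ((X - C t) ^ m : ℝ[X]).eval (w j)) = fun j => (w j - t) ^ m := by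
    funext j; simp
  rw [dd_eq_coeff w hw, ← heval, ← key]
  exact Polynomial.coeff_eq_zero_of_natDegree_lt (by omega)

lemma dd_linear_mul_left {n : ℕ} (w : Fin (n+1) → ℝ) (hw : Function.Injective w)
    (t : ℝ) (g : ℝ → ℝ) :
    dd w (fun x => (x - t) * g x)
      = (w 0 - t) * dd w g + dd (w ∘ Fin.succ) g := by
  have hD : ∀ i : Fin n, ∏ l ∈ Finset.univ.erase (Fin.succ i), (w (Fin.succ i) - w l)
      = (w (Fin.succ i) - w 0)
        * ∏ l ∈ Finset.univ.erase i, (w (Fin.succ i) - w (Fin.succ l)) :=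
    fun i => prod_erase_succ (fun l => w (Fin.succ i) - w l) i
  unfold dd
  rw [Fin.sum_univ_succ, Fin.sum_univ_succ
    (f := fun j : Fin (n+1) => g (w j) / ∏ l ∈ Finset.univ.erase j, (w j - w l))]
  simp only [hD, Function.comp_apply]
  rw [mul_add, mul_div_assoc, add_assoc, mul_sum, ← Finset.sum_add_distrib]
  congr 1
  refine Finset.sum_congr rfl fun i _ => ?_
  have hne : w (Fin.succ i) - w 0 ≠ 0 :=
    sub_ne_zero.mpr (fun hh => (Fin.succ_ne_zero i) (hw hh))
  set Q := ∏ l ∈ Finset.univ.erase i, (w (Fin.succ i) - w (Fin.succ l)) with hQdef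
  rcases eq_or_ne Q 0 with hQ | hQ
  · simp [hQ]
  · field_simp
    ring

lemma dd_linear_mul_right {n : ℕ} (w : Fin (n+1) → ℝ) (hw : Function.Injective w)
    (t : ℝ) (g : ℝ → ℝ) :
    dd w (fun x => (x - t) * g x)
      = (w (Fin.last n) - t) * dd w g + dd (w ∘ Fin.castSucc) g := by
  have hD : ∀ i : Fin n, ∏ l ∈ Finset.univ.erase (Fin.castSucc i), (w (Fin.castSucc i) - w l)
      = (w (Fin.castSucc i) - w (Fin.last n))
        * ∏ l ∈ Finset.univ.erase i, (w (Fin.castSucc i) - w (Fin.castSucc l)) :=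
    fun i => prod_erase_castSucc (fun l => w (Fin.castSucc i) - w l) i
  unfold dd
  rw [Fin.sum_univ_castSucc, Fin.sum_univ_castSucc
    (f := fun j : Fin (n+1) => g (w j) / ∏ l ∈ Finset.univ.erase j, (w j - w l))]
  simp only [hD, Function.comp_apply]
  have hterm : ∀ i ∈ (Finset.univ : Finset (Fin n)),
      (w (Fin.castSucc i) - t) * g (w (Fin.castSucc i)) /
        ((w (Fin.castSucc i) - w (Fin.last n))
          * ∏ l ∈ Finset.univ.erase i, (w (Fin.castSucc i) - w (Fin.castSucc l)))
      = (w (Fin.last n) - t) * (g (w (Fin.castSucc i)) /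
        ((w (Fin.castSucc i) - w (Fin.last n))
          * ∏ l ∈ Finset.univ.erase i, (w (Fin.castSucc i) - w (Fin.castSucc l))))
        + g (w (Fin.castSucc i))
          / ∏ l ∈ Finset.univ.erase i, (w (Fin.castSucc i) - w (Fin.castSucc l)) := by
    intro i _
    have hne : w (Fin.castSucc i) - w (Fin.last n) ≠ 0 :=
      sub_ne_zero.mpr (fun hh => (Fin.castSucc_lt_last i).ne (hw hh))
    set Q := ∏ l ∈ Finset.univ.erase i, (w (Fin.castSucc i) - w (Fin.castSucc l)) with hQdef
    rcases eq_or_ne Q 0 with hQ | hQ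
    · simp [hQ]
    · field_simp
      ring
  rw [Finset.sum_congr rfl hterm, Finset.sum_add_distrib, mul_add, mul_div_assoc, mul_sum]
  ring

lemma dd_trunc_nonneg (t : ℝ) : ∀ (m : ℕ) (w : Fin (m+2) → ℝ), StrictMono w →
    0 ≤ dd w (fun x => if t < x then (x - t) ^ m else 0) := by
  intro m
  induction m with
  | zero =>
    intro w hw
    have h01 : w 0 < w 1 := hw (show (0 : Fin 2) < 1 by decide)
    have e0 : (Finset.univ.erase (0 : Fin 2)) = {1} := by decide
    have e1 : (Finset.univ.erase (1 : Fin 2)) = {0} := by decide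
    unfold dd
    rw [Fin.sum_univ_two, e0, e1, Finset.prod_singleton, Finset.prod_singleton]
    by_cases h1 : t < w 1
    · by_cases h0 : t < w 0
      · simp only [if_pos h0, if_pos h1, pow_zero]
        have hz : (1:ℝ) / (w 0 - w 1) + 1 / (w 1 - w 0) = 0 := by
          have hne : w 1 - w 0 ≠ 0 := ne_of_gt (sub_pos.mpr h01)
          have hr : w 0 - w 1 = -(w 1 - w 0) := by ring
          rw [hr, div_neg, neg_add_cancel]
        rw [hz]
      · simp only [if_pos h1, if_neg h0, pow_zero, zero_div, zero_add]
        exact (div_pos one_pos (sub_pos.mpr h01)).le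
    · have h0 : ¬ t < w 0 := fun hc => h1 (hc.trans h01)
      simp [if_neg h0, if_neg h1]
  | succ m ih =>
    intro w hw
    have hinj := hw.injective
    have hfeq : (fun x => if t < x then (x - t) ^ (m+1) else (0:ℝ))
        = fun x => (x - t) * (if t < x then (x - t) ^ m else 0) := by
      funext x
      split_ifs with h
      · rw [pow_succ]; ring
      · ring
    by_cases hlast : t < w (Fin.last (m+2))
    · by_cases h0 : t < w 0
      · have hall : ∀ j, t < w j := fun j => lt_of_lt_of_le h0 (hw.monotone (Fin.zero_le j))
        have hcongr : dd w (fun x => if t < x then (x - t) ^ (m+1) else 0)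
            = dd w (fun x => (x - t) ^ (m+1)) := by
          unfold dd
          exact Finset.sum_congr rfl fun j _ => by simp only [if_pos (hall j)]
        rw [hcongr, dd_poly_zero t w hinj (by omega)]
      · have hB := dd_linear_mul_left w hinj t (fun x => if t < x then (x - t) ^ m else 0)
        have hB' := dd_linear_mul_right w hinj t (fun x => if t < x then (x - t) ^ m else 0)
        have hT := ih (w ∘ Fin.succ) (hw.comp Fin.strictMono_succ)
        have hI := ih (w ∘ Fin.castSucc) (hw.comp Fin.strictMono_castSucc)
        have h0' : w 0 ≤ t := not_lt.mp h0
        have hlt : w 0 < w (Fin.last (m+2)) := hw (Fin.last_pos)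
        rw [hfeq]
        have hcomb : (w (Fin.last (m+2)) - w 0)
              * dd w (fun x => (x - t) * if t < x then (x - t) ^ m else 0)
            = (w (Fin.last (m+2)) - t)
                * dd (w ∘ Fin.succ) (fun x => if t < x then (x - t) ^ m else 0)
              + (t - w 0)
                * dd (w ∘ Fin.castSucc) (fun x => if t < x then (x - t) ^ m else 0) := by
          linear_combination (w (Fin.last (m+2)) - t) * hB - (w 0 - t) * hB'
        nlinarith [hcomb, mul_nonneg (sub_nonneg.mpr hlast.le) hT,
          mul_nonneg (sub_nonneg.mpr h0') hI, sub_pos.mpr hlt]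
    · have hz : dd w (fun x => if t < x then (x - t) ^ (m+1) else 0) = 0 := by
        unfold dd
        refine Finset.sum_eq_zero fun j _ => ?_
        have : ¬ t < w j := fun hc => hlast (lt_of_lt_of_le hc (hw.monotone (Fin.le_last j)))
        simp only [if_neg this, zero_div]
      rw [hz]

lemma betaCoeff_eq_dd (k : ℕ) (t : ℝ) (z : Fin (k+1) → ℝ) :
    betaCoeff (k+1) t z = dd z (fun x => if t < x then (x - t) ^ k else 0) := by
  unfold betaCoeff dd
  rw [Finset.sum_filter]
  refine Finset.sum_congr rfl fun j _ => ?_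
  have hcard : (Finset.univ.erase j).card = k := by
    rw [Finset.card_erase_of_mem (Finset.mem_univ j), Finset.card_univ, Fintype.card_fin]
    omega
  simp only []
  split_ifs with h
  · rw [Finset.prod_div_distrib, Finset.prod_const, hcard]
  · rw [zero_div]

lemma dd_snoc {k : ℕ} (x : Fin k → ℝ) (y : ℝ) (f : ℝ → ℝ) :
    dd (Fin.snoc x y) f
      = ∑ i : Fin k, f (x i) /
          ((x i - y) * ∏ l ∈ Finset.univ.erase i, (x i - x l))
        + f y / ∏ l : Fin k, (y - x l) := by
  unfold dd
  rw [Fin.sum_univ_castSucc]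
  congr 1
  · refine Finset.sum_congr rfl fun i _ => ?_
    rw [prod_erase_castSucc (fun l => (Fin.snoc x y : Fin (k+1) → ℝ) (Fin.castSucc i) - (Fin.snoc x y : Fin (k+1) → ℝ) l) i]
    simp only [Fin.snoc_castSucc, Fin.snoc_last]
  · rw [prod_erase_last (fun l => (Fin.snoc x y : Fin (k+1) → ℝ) (Fin.last k) - (Fin.snoc x y : Fin (k+1) → ℝ) l)]
    simp only [Fin.snoc_castSucc, Fin.snoc_last]

lemma dd_diff {k : ℕ} (x : Fin k → ℝ) (y₁ y₂ : ℝ) (hy₁ : ∀ i, x i < y₁)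
    (hy₂ : ∀ i, x i < y₂) (h12 : y₁ < y₂) (f : ℝ → ℝ) :
    dd (Fin.snoc x y₂) f - dd (Fin.snoc x y₁) f
      = (y₂ - y₁) * dd (Fin.snoc (Fin.snoc x y₁) y₂) f := by
  rw [dd_snoc, dd_snoc, dd_snoc, Fin.sum_univ_castSucc]
  simp only [Fin.snoc_castSucc, Fin.snoc_last]
  have hP : ∀ i : Fin k, (∏ l ∈ Finset.univ.erase (Fin.castSucc i),
        (x i - (Fin.snoc x y₁ : Fin (k+1) → ℝ) l))
      = (x i - y₁) * ∏ l ∈ Finset.univ.erase i, (x i - x l) := by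
    intro i
    rw [prod_erase_castSucc (fun l => x i - (Fin.snoc x y₁ : Fin (k+1) → ℝ) l) i]
    simp only [Fin.snoc_castSucc, Fin.snoc_last]
  have hQ : (∏ l ∈ Finset.univ.erase (Fin.last k),
        (y₁ - (Fin.snoc x y₁ : Fin (k+1) → ℝ) l)) = ∏ l : Fin k, (y₁ - x l) := by
    rw [prod_erase_last (fun l => y₁ - (Fin.snoc x y₁ : Fin (k+1) → ℝ) l)]
    simp only [Fin.snoc_castSucc]
  have hR : (∏ l : Fin (k+1), (y₂ - (Fin.snoc x y₁ : Fin (k+1) → ℝ) l))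
      = (∏ l : Fin k, (y₂ - x l)) * (y₂ - y₁) := by
    rw [Fin.prod_univ_castSucc]
    simp only [Fin.snoc_castSucc, Fin.snoc_last]
  simp only [hP, hQ, hR]
  have hterm : ∀ i ∈ (Finset.univ : Finset (Fin k)),
      (y₂ - y₁) * (f (x i) / ((x i - y₂) * ((x i - y₁) * ∏ l ∈ Finset.univ.erase i, (x i - x l))))
      = f (x i) / ((x i - y₂) * ∏ l ∈ Finset.univ.erase i, (x i - x l))
        - f (x i) / ((x i - y₁) * ∏ l ∈ Finset.univ.erase i, (x i - x l)) := by
    intro i _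
    have h1 : x i - y₁ ≠ 0 := sub_ne_zero.mpr (hy₁ i).ne
    have h2 : x i - y₂ ≠ 0 := sub_ne_zero.mpr (hy₂ i).ne
    rcases eq_or_ne (∏ l ∈ Finset.univ.erase i, (x i - x l)) 0 with hP0 | hP0
    · simp [hP0]
    · field_simp
      ring
  have hend1 : (y₂ - y₁) * (f y₁ / ((y₁ - y₂) * ∏ l : Fin k, (y₁ - x l)))
      = -(f y₁ / ∏ l : Fin k, (y₁ - x l)) := by
    have h3 : y₁ - y₂ ≠ 0 := sub_ne_zero.mpr h12.ne
    rcases eq_or_ne (∏ l : Fin k, (y₁ - x l)) 0 with h | h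
    · simp [h]
    · field_simp
      ring
  have hend2 : (y₂ - y₁) * (f y₂ / ((∏ l : Fin k, (y₂ - x l)) * (y₂ - y₁)))
      = f y₂ / ∏ l : Fin k, (y₂ - x l) := by
    have h3 : y₂ - y₁ ≠ 0 := sub_ne_zero.mpr h12.ne'
    rcases eq_or_ne (∏ l : Fin k, (y₂ - x l)) 0 with h | h
    · simp [h]
    · field_simp
  rw [mul_add, mul_add, Finset.mul_sum, Finset.sum_congr rfl hterm, hend1, hend2,
    Finset.sum_sub_distrib]
  ring

lemma strictMono_snoc {k : ℕ} (x : Fin k → ℝ) (y : ℝ) (hx : StrictMono x)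
    (hy : ∀ i, x i < y) : StrictMono (Fin.snoc x y : Fin (k+1) → ℝ) := by
  intro a b hab
  rcases Fin.eq_castSucc_or_eq_last b with ⟨b', rfl⟩ | rfl
  · rcases Fin.eq_castSucc_or_eq_last a with ⟨a', rfl⟩ | rfl
    · simpa using hx (Fin.castSucc_lt_castSucc_iff.mp hab)
    · exact absurd hab (Fin.castSucc_lt_last b').asymm
  · rcases Fin.eq_castSucc_or_eq_last a with ⟨a', rfl⟩ | rfl
    · simpa using hy a'
    · exact absurd hab (lt_irrefl _)

/-- β_k(t) is monotonically nondecreasing in the largest node. -/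
theorem stmt11 (k : ℕ) (x : Fin k → ℝ) (t : ℝ) (hx : StrictMono x)
    (y₁ y₂ : ℝ) (hy₁ : ∀ i, x i < y₁) (h12 : y₁ ≤ y₂) :
    betaCoeff (k + 1) t (Fin.snoc x y₁) ≤ betaCoeff (k + 1) t (Fin.snoc x y₂) := by
  rcases eq_or_lt_of_le h12 with rfl | hlt
  · exact le_refl _
  · have hy₂ : ∀ i, x i < y₂ := fun i => (hy₁ i).trans hlt
    rw [betaCoeff_eq_dd, betaCoeff_eq_dd]
    have hy₁' : ∀ i : Fin (k+1), (Fin.snoc x y₁ : Fin (k+1) → ℝ) i < y₂ := by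
      intro i
      refine Fin.lastCases ?_ ?_ i
      · simpa using hlt
      · intro j; simpa using hy₂ j
    have hW : StrictMono (Fin.snoc (Fin.snoc x y₁) y₂ : Fin (k+2) → ℝ) :=
      strictMono_snoc _ _ (strictMono_snoc x y₁ hx hy₁) hy₁'
    have hkey := dd_trunc_nonneg t k (Fin.snoc (Fin.snoc x y₁) y₂) hW
    have hdiff := dd_diff x y₁ y₂ hy₁ hy₂ hlt (fun u => if t < u then (u - t) ^ k else 0)
    linarith [hdiff, mul_nonneg (sub_pos.mpr hlt).le hkey]
end
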